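/- Let t ≥ 1, d ≥ 4, and u = x_2 · ∏_{j=2}^{d} x_{i_j} a t-spread monomial such that i_j ≥ (j−1)t+4 for some 2 ≤ j ≤ d. Set v = ∏_{j=1}^{d−3} x_{(j−1)t+1}. Then the four monomials x_{(d−3)t+1}x_{(d−2)t+2}x_{(d−1)t+2}v, x_{(d−3)t+1}x_{(d−2)t+2}x_{(d−1)t+4}v, x_{(d−3)t+1}x_{(d−2)t+1}x_{(d−1)t+3}v, x_{(d−3)t+2}x_{(d−2)t+2}x_{(d−1)t+3}v are minimal generators of B_t(u) and form an induced 4-cycle in the sorted graph of B_t(u). -/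

import Mathlib

/-- Split a list into (odd-position entries, even-position entries), positions counted from 1. -/
def altSplit {α : Type*} : List α → List α × List α
  | [] => ([], [])
  | a :: l => (a :: (altSplit l).2, (altSplit l).1)

/-- The weakly increasing list of indices of a monomial (viewed as a multiset of variable indices). -/
def mSort (m : Multiset ℕ) : List ℕ := m.sort (· ≤ ·)

/-- The sorting operator: merge the indices of `u` and `v` in weakly increasing order and
give the odd positions to the first component, the even positions to the second. -/
def sortPair (u v : Multiset ℕ) : Multiset ℕ × Multiset ℕ :=
  (↑(altSplit (mSort (u + v))).1, ↑(altSplit (mSort (u + v))).2)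

/-- A pair of monomials is sorted if the sorting operator fixes it (up to swapping). -/
def SortedPair (u v : Multiset ℕ) : Prop :=
  sortPair u v = (u, v) ∨ sortPair u v = (v, u)

/-- A monomial is `t`-spread if consecutive indices (in weakly increasing order) differ by ≥ t. -/
def TSpread (t : ℕ) (m : Multiset ℕ) : Prop :=
  (mSort m).Chain' (fun a b => a + t ≤ b)

/-- `v` is componentwise dominated by `u`. -/
def Dominates (v u : Multiset ℕ) : Prop :=
  List.Forall₂ (· ≤ ·) (mSort v) (mSort u)

/-- The minimal generators of the t-spread principal Borel ideal `B_t(u)`: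
t-spread monomials of the same degree componentwise dominated by `u`. -/
def BtGens (t : ℕ) (u : Multiset ℕ) : Set (Multiset ℕ) :=
  {v | Multiset.card v = Multiset.card u ∧ TSpread t v ∧ Dominates v u}

/-- The sorted graph of `B_t(u)`: vertices the minimal generators, edges the sorted pairs. -/
def sortedGraph (t : ℕ) (u : Multiset ℕ) : SimpleGraph ↥(BtGens t u) :=
  SimpleGraph.fromRel (fun v w => SortedPair v.1 w.1)

/-- The graph has an induced cycle of length `n ≥ 4`. -/
def HasInducedCycle {V : Type*} (G : SimpleGraph V) : Prop :=
  ∃ n : ℕ, 4 ≤ n ∧ ∃ f : ZMod n → V, Function.Injective f ∧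
    ∀ i j : ZMod n, G.Adj (f i) (f j) ↔ (j = i + 1 ∨ i = j + 1)


section AuxLemmas

def List.Sorted {α : Type*} (r : α → α → Prop) (l : List α) : Prop := l.Pairwise r

@[simp] theorem List.sorted_nil {α : Type*} {r : α → α → Prop} : List.Sorted r [] :=
  List.Pairwise.nil

theorem List.sorted_cons {α : Type*} {r : α → α → Prop} {a : α} {l : List α} :
    List.Sorted r (a :: l) ↔ (∀ b ∈ l, r a b) ∧ List.Sorted r l :=
  List.pairwise_cons

theorem List.eq_of_perm_of_sorted {α : Type*} {r : α → α → Prop} [Std.Antisymm r]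
    {l₁ l₂ : List α} (hp : l₁.Perm l₂) (h₁ : List.Sorted r l₁) (h₂ : List.Sorted r l₂) :
    l₁ = l₂ :=
  List.Perm.eq_of_pairwise' h₁ h₂ hp

theorem Multiset.sort_sorted {α : Type*} (r : α → α → Prop) [DecidableRel r] [IsTrans α r]
    [Std.Antisymm r] [Std.Total r] (s : Multiset α) : List.Sorted r (s.sort r) :=
  Multiset.pairwise_sort s r

theorem List.chain'_map {α β : Type*} {R : α → α → Prop} (f : β → α) {l : List β} :
    List.Chain' R (l.map f) ↔ List.Chain' (fun a b : β => R (f a) (f b)) l :=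
  List.isChain_map f

theorem List.chain'_append {α : Type*} {R : α → α → Prop} {l₁ l₂ : List α} :
    List.Chain' R (l₁ ++ l₂) ↔ List.Chain' R l₁ ∧ List.Chain' R l₂ ∧
      ∀ x ∈ l₁.getLast?, ∀ y ∈ l₂.head?, R x y :=
  List.isChain_append

theorem List.chain'_range_succ (r : ℕ → ℕ → Prop) (n : ℕ) :
    List.Chain' r (List.range n.succ) ↔ ∀ m < n, r m m.succ :=
  List.isChain_range_succ r n

theorem List.chain'_cons {α : Type*} {R : α → α → Prop} {a b : α} {l : List α} :
    List.Chain' R (a :: b :: l) ↔ R a b ∧ List.Chain' R (b :: l) :=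
  List.isChain_cons_cons

@[simp] theorem List.chain'_nil {α : Type*} {R : α → α → Prop} :
    List.Chain' R [] :=
  List.IsChain.nil

@[simp] theorem List.chain'_singleton {α : Type*} {R : α → α → Prop} (a : α) :
    List.Chain' R [a] :=
  List.isChain_singleton a

lemma altSplit_cons_cons {α : Type*} (a b : α) (l : List α) :
    altSplit (a :: b :: l) = (a :: (altSplit l).1, b :: (altSplit l).2) := rfl

lemma altSplit_six (p1 p2 p3 p4 p5 p6 : ℕ) :
    altSplit [p1,p2,p3,p4,p5,p6] = ([p1,p3,p5],[p2,p4,p6]) := rfl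

lemma altSplit_dup_append {α : Type*} (V l : List α) :
    altSplit ((V.flatMap fun x => [x,x]) ++ l) = (V ++ (altSplit l).1, V ++ (altSplit l).2) := by
  induction V with
  | nil => simp [altSplit]
  | cons x V ih => simp [List.flatMap_cons, altSplit_cons_cons, ih]

lemma mSort_coe (l : List ℕ) (h : l.Sorted (· ≤ ·)) : mSort ↑l = l :=
  List.eq_of_perm_of_sorted (Multiset.coe_eq_coe.mp (Multiset.sort_eq _ _))
    (Multiset.sort_sorted _ _) h

lemma coe_ne_coe_of_sorted {l l' : List ℕ} (h : l.Sorted (· ≤ ·)) (h' : l'.Sorted (· ≤ ·))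
    (hne : l ≠ l') : (↑l : Multiset ℕ) ≠ ↑l' := fun he =>
  hne (by rw [← mSort_coe l h, ← mSort_coe l' h', he])

lemma coe_dup (L : List ℕ) : (↑(L.flatMap fun x => [x,x]) : Multiset ℕ) = ↑L + ↑L := by
  induction L with
  | nil => simp
  | cons x L ih =>
    simp only [List.flatMap_cons, List.cons_append, List.nil_append, ← Multiset.cons_coe,
      ih, ← Multiset.singleton_add]
    abel

lemma sorted_dup (L : List ℕ) (h : L.Sorted (· ≤ ·)) :
    (L.flatMap fun x => [x,x]).Sorted (· ≤ ·) := by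
  induction L with
  | nil => simp
  | cons x L ih =>
    rw [List.sorted_cons] at h
    simp only [List.flatMap_cons, List.cons_append, List.nil_append, List.sorted_cons]
    refine ⟨?_, ?_, ih h.2⟩ <;> simp only [List.mem_cons, List.mem_flatMap] <;>
      rintro y (rfl | ⟨z, hz, hy⟩) <;> simp_all

lemma coe_split (A B : List ℕ) : (↑(A ++ B) : Multiset ℕ) = ↑A + ↑B := rfl

lemma tri_add (x y z : ℕ) (L : List ℕ) : ({x,y,z} : Multiset ℕ) + ↑L = ↑(L ++ [x,y,z]) := by
  simp only [Multiset.insert_eq_cons, Multiset.cons_coe, ← Multiset.coe_singleton,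
    ← Multiset.coe_add]
  exact Multiset.coe_eq_coe.mpr (List.perm_append_comm (l₁ := [x,y,z]))

lemma sum_dup (L T1 T2 T : List ℕ) (h : (↑T1 + ↑T2 : Multiset ℕ) = ↑T) :
    (↑(L ++ T1) + ↑(L ++ T2) : Multiset ℕ) = ↑((L.flatMap fun x => [x,x]) ++ T) := by
  rw [coe_split, coe_split, coe_split, coe_dup, ← h]
  abel

lemma sortPair_compute (L T1 T2 M : List ℕ)
    (hsum : (↑T1 + ↑T2 : Multiset ℕ) = ↑M)
    (hsorted : ((L.flatMap fun x => [x,x]) ++ M).Sorted (· ≤ ·)) :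
    sortPair ↑(L ++ T1) ↑(L ++ T2) =
      (↑(L ++ (altSplit M).1), ↑(L ++ (altSplit M).2)) := by
  unfold sortPair
  rw [sum_dup L T1 T2 M hsum, mSort_coe _ hsorted, altSplit_dup_append]

lemma sortedL (t n : ℕ) : ((List.range n).map (fun j => j*t+1)).Sorted (· ≤ ·) := by
  rw [List.Sorted, List.pairwise_map]
  exact (List.pairwise_lt_range (n := n)).imp (fun h => by nlinarith)

lemma memL_le {t n x : ℕ} (ht : 1 ≤ t) (hx : x ∈ (List.range n).map (fun j => j*t+1)) :
    x ≤ n * t := by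
  simp only [List.mem_map, List.mem_range] at hx
  obtain ⟨j, hj, rfl⟩ := hx
  have : (j+1)*t ≤ n*t := Nat.mul_le_mul_right t hj
  nlinarith

lemma sortedL_append (t n : ℕ) (ht : 1 ≤ t) (M : List ℕ) (hM : M.Sorted (· ≤ ·))
    (hge : ∀ y ∈ M, n*t ≤ y) :
    ((List.range n).map (fun j => j*t+1) ++ M).Sorted (· ≤ ·) := by
  rw [List.Sorted, List.pairwise_append]
  exact ⟨sortedL t n, hM, fun x hx y hy => le_trans (memL_le ht hx) (hge y hy)⟩

lemma sorted_dupL_append (t n : ℕ) (ht : 1 ≤ t) (M : List ℕ) (hM : M.Sorted (· ≤ ·))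
    (hge : ∀ y ∈ M, n*t ≤ y) :
    ((((List.range n).map (fun j => j*t+1)).flatMap fun x => [x,x]) ++ M).Sorted (· ≤ ·) := by
  rw [List.Sorted, List.pairwise_append]
  refine ⟨sorted_dup _ (sortedL t n), hM, fun x hx y hy => ?_⟩
  simp only [List.mem_flatMap, List.mem_cons] at hx
  obtain ⟨z, hz, rfl | rfl | h⟩ := hx
  · exact le_trans (memL_le ht hz) (hge y hy)
  · exact le_trans (memL_le ht hz) (hge y hy)
  · simp at h

lemma chainL (t n : ℕ) :
    List.Chain' (fun a b => a + t ≤ b) ((List.range n).map (fun j => j*t+1)) := by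
  rw [List.chain'_map]
  cases n with
  | zero => simp
  | succ m => exact (List.chain'_range_succ _ m).mpr (fun k _ => by
      simp only [Nat.succ_eq_add_one]; nlinarith)

lemma getLastL (t m : ℕ) :
    ((List.range (m+1)).map (fun j => j*t+1)).getLast? = some (m*t+1) := by
  rw [List.range_succ, List.map_append]; simp

lemma sp_full (t n : ℕ) (ht : 1 ≤ t) (x1 y1 z1 x2 y2 z2 p1 p2 p3 p4 p5 p6 : ℕ)
    (hperm : ({x1,y1,z1} + {x2,y2,z2} : Multiset ℕ) = ↑[p1,p2,p3,p4,p5,p6])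
    (hsorted : ([p1,p2,p3,p4,p5,p6] : List ℕ).Sorted (· ≤ ·))
    (hge : ∀ y ∈ ([p1,p2,p3,p4,p5,p6] : List ℕ), n*t ≤ y) :
    sortPair ({x1,y1,z1} + ↑((List.range n).map (fun j => j*t+1)))
             ({x2,y2,z2} + ↑((List.range n).map (fun j => j*t+1)))
      = (({p1,p3,p5} : Multiset ℕ) + ↑((List.range n).map (fun j => j*t+1)),
         ({p2,p4,p6} : Multiset ℕ) + ↑((List.range n).map (fun j => j*t+1))) := by
  have hsum : (↑[x1,y1,z1] + ↑[x2,y2,z2] : Multiset ℕ) = ↑[p1,p2,p3,p4,p5,p6] := hperm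
  rw [tri_add x1 y1 z1, tri_add x2 y2 z2,
    sortPair_compute _ _ _ [p1,p2,p3,p4,p5,p6] hsum (sorted_dupL_append t n ht _ hsorted hge),
    altSplit_six, tri_add p1 p3 p5, tri_add p2 p4 p6]

lemma mem_helper (t m : ℕ) (ht : 1 ≤ t) (i : ℕ → ℕ) (x y z : ℕ)
    (hx : (m+1)*t + 1 ≤ x) (hxy : x + t ≤ y) (hyz : y + t ≤ z)
    (hdomx : x ≤ i (m+2)) (hdomy : y ≤ i (m+3)) (hdomz : z ≤ i (m+4))
    (hmono2 : ∀ j, j < m+1 → j*t+1 ≤ i (j+1))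
    (hUsorted : (((List.range (m+4)).map (fun k => i (k+1)))).Sorted (· ≤ ·)) :
    (({x,y,z} : Multiset ℕ) + ↑((List.range (m+1)).map (fun j => j*t+1))) ∈
      BtGens t ↑((List.range (m+4)).map (fun k => i (k+1))) := by
  have hel : (m+1)*t = m*t + t := by ring
  have hTs : ([x,y,z] : List ℕ).Sorted (· ≤ ·) := by
    simp only [List.sorted_cons, List.mem_cons, List.mem_singleton, List.not_mem_nil,
      List.sorted_nil, and_true, forall_eq_or_imp, forall_eq, or_false, false_implies, forall_const]
    omega
  have hge : ∀ w ∈ ([x,y,z] : List ℕ), (m+1)*t ≤ w := by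
    intro w hw
    simp only [List.mem_cons, List.not_mem_nil, or_false] at hw
    rcases hw with rfl | rfl | rfl <;> omega
  rw [tri_add]
  have hsortedLT := sortedL_append t (m+1) ht [x,y,z] hTs hge
  refine ⟨?_, ?_, ?_⟩
  · simp
  · show (mSort _).Chain' _
    rw [mSort_coe _ hsortedLT, List.chain'_append]
    refine ⟨chainL t (m+1), ?_, ?_⟩
    · simp only [List.chain'_cons, List.chain'_singleton, and_true]
      exact ⟨hxy, hyz⟩
    · rw [getLastL]
      intro a ha b hb
      simp only [Option.mem_def, Option.some.injEq] at ha
      simp only [List.head?_cons, Option.mem_def, Option.some.injEq] at hb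
      omega
  · show List.Forall₂ _ (mSort _) (mSort _)
    rw [mSort_coe _ hsortedLT, mSort_coe _ hUsorted]
    have hr : List.range (m+4) = List.range (m+1) ++ [m+1, m+2, m+3] := by
      have e4 : m+4 = (m+3)+1 := by omega
      have e3 : m+3 = (m+2)+1 := by omega
      have e2 : m+2 = (m+1)+1 := by omega
      rw [e4, List.range_succ, e3, List.range_succ, e2, List.range_succ]
      simp [← e3, ← e2]
    rw [hr, List.map_append]
    refine List.rel_append ?_ ?_
    · rw [List.forall₂_map_left_iff, List.forall₂_map_right_iff, List.forall₂_same]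
      intro j hj
      exact hmono2 j (List.mem_range.mp hj)
    · simp only [List.map_cons, List.map_nil]
      have e1 : m+1+1 = m+2 := by omega
      have e2 : m+2+1 = m+3 := by omega
      have e3 : m+3+1 = m+4 := by omega
      rw [e1, e2, e3]
      exact List.Forall₂.cons hdomx (List.Forall₂.cons hdomy
        (List.Forall₂.cons hdomz List.Forall₂.nil))

end AuxLemmas

lemma main_cycle (t m : ℕ) (ht : 1 ≤ t) (i : ℕ → ℕ) (h1 : i 1 = 2)
    (hspread : ∀ j, 1 ≤ j → j < m + 4 → i j + t ≤ i (j + 1))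
    (hbig : ∃ j, 2 ≤ j ∧ j ≤ m + 4 ∧ (j - 1) * t + 4 ≤ i j) :
    (let u : Multiset ℕ := ↑((List.range (m+4)).map (fun k => i (k + 1)));
     let v : Multiset ℕ := ↑((List.range (m+1)).map (fun j => j * t + 1));
     let m₁ : Multiset ℕ := {(m+1) * t + 1, (m+2) * t + 2, (m+3) * t + 2} + v;
     let m₂ : Multiset ℕ := {(m+1) * t + 1, (m+2) * t + 2, (m+3) * t + 4} + v;
     let m₃ : Multiset ℕ := {(m+1) * t + 1, (m+2) * t + 1, (m+3) * t + 3} + v;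
     let m₄ : Multiset ℕ := {(m+1) * t + 2, (m+2) * t + 2, (m+3) * t + 3} + v;
     m₁ ∈ BtGens t u ∧ m₂ ∈ BtGens t u ∧ m₃ ∈ BtGens t u ∧ m₄ ∈ BtGens t u ∧
     List.Pairwise (· ≠ ·) [m₁, m₂, m₃, m₄] ∧
     SortedPair m₁ m₂ ∧ SortedPair m₂ m₃ ∧ SortedPair m₃ m₄ ∧ SortedPair m₄ m₁ ∧
     ¬ SortedPair m₁ m₃ ∧ ¬ SortedPair m₃ m₁ ∧
     ¬ SortedPair m₂ m₄ ∧ ¬ SortedPair m₄ m₂) := by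
  intro u v m₁ m₂ m₃ m₄
  have e1 : (m+1)*t = m*t + t := by ring
  have e2 : (m+2)*t = m*t + 2*t := by ring
  have e3 : (m+3)*t = m*t + 3*t := by ring
  have hmono : ∀ a k, 1 ≤ a → a + k ≤ m + 4 → i a + k * t ≤ i (a + k) := by
    intro a k
    induction k with
    | zero => simp
    | succ k ih =>
      intro ha hk
      have hs := hspread (a + k) (by omega) (by omega)
      have hik := ih ha (by omega)
      have ekt : (k+1)*t = k*t + t := by ring
      have e : a + (k+1) = (a + k) + 1 := by omega
      rw [e]
      omega
  have hmono2 : ∀ j, j < m+1 → j*t+1 ≤ i (j+1) := by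
    intro j hj
    have h := hmono 1 j (le_refl 1) (by omega)
    rw [h1] at h
    have e : 1 + j = j + 1 := by omega
    rw [e] at h
    omega
  have hdom2 : 2 + (m+1)*t ≤ i (m+2) := by
    have h := hmono 1 (m+1) (le_refl 1) (by omega)
    rw [h1] at h
    have e : 1 + (m+1) = m+2 := by omega
    rw [e] at h; omega
  have hdom3 : 2 + (m+2)*t ≤ i (m+3) := by
    have h := hmono 1 (m+2) (le_refl 1) (by omega)
    rw [h1] at h
    have e : 1 + (m+2) = m+3 := by omega
    rw [e] at h; omega
  have hdom4 : (m+3)*t + 4 ≤ i (m+4) := by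
    obtain ⟨j, hj2, hjle, hjbig⟩ := hbig
    have h := hmono j (m+4-j) (by omega) (by omega)
    have e : j + (m+4-j) = m+4 := by omega
    rw [e] at h
    have emul : (j-1)*t + (m+4-j)*t = (m+3)*t := by
      rw [← Nat.add_mul]; congr 1; omega
    omega
  have hUsorted : (((List.range (m+4)).map (fun k => i (k+1)))).Sorted (· ≤ ·) := by
    rw [List.Sorted, List.pairwise_map]
    refine (List.pairwise_lt_range (n := m+4)).imp_of_mem ?_
    intro a b ha hb hab
    have hb4 : b < m + 4 := List.mem_range.mp hb
    have h := hmono (a+1) (b-a) (by omega) (by omega)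
    have e : (a+1) + (b-a) = b+1 := by omega
    rw [e] at h
    omega
  have hmem1 : m₁ ∈ BtGens t u :=
    mem_helper t m ht i _ _ _ (by omega) (by omega) (by omega)
      (by omega) (by omega) (by omega) hmono2 hUsorted
  have hmem2 : m₂ ∈ BtGens t u :=
    mem_helper t m ht i _ _ _ (by omega) (by omega) (by omega)
      (by omega) (by omega) (by omega) hmono2 hUsorted
  have hmem3 : m₃ ∈ BtGens t u :=
    mem_helper t m ht i _ _ _ (by omega) (by omega) (by omega)
      (by omega) (by omega) (by omega) hmono2 hUsorted
  have hmem4 : m₄ ∈ BtGens t u :=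
    mem_helper t m ht i _ _ _ (by omega) (by omega) (by omega)
      (by omega) (by omega) (by omega) hmono2 hUsorted
  have hsort6 : ∀ (q1 q2 q3 q4 q5 q6 : ℕ), ([q1,q2,q3,q4,q5,q6] : List ℕ).Sorted (· ≤ ·) ↔
      (q1 ≤ q2 ∧ q2 ≤ q3 ∧ q3 ≤ q4 ∧ q4 ≤ q5 ∧ q5 ≤ q6) := by
    intro q1 q2 q3 q4 q5 q6
    simp only [List.sorted_cons, List.mem_cons, List.mem_singleton, List.not_mem_nil,
      List.sorted_nil, and_true, forall_eq_or_imp, forall_eq, or_false, false_implies, forall_const]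
    omega
  have sort3 : ∀ (a1 a2 a3 : ℕ), a1 ≤ a2 → a2 ≤ a3 →
      ([a1,a2,a3] : List ℕ).Sorted (· ≤ ·) := by
    intro a1 a2 a3 h12 h23
    simp only [List.sorted_cons, List.mem_cons, List.mem_singleton, List.not_mem_nil,
      List.sorted_nil, and_true, forall_eq_or_imp, forall_eq, or_false, false_implies, forall_const]
    omega
  have tsortF : ∀ T : List ℕ, T.Sorted (· ≤ ·) → (∀ y ∈ T, (m+1)*t ≤ y) →
      (((List.range (m+1)).map (fun j => j*t+1)) ++ T).Sorted (· ≤ ·) :=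
    fun T h h' => sortedL_append t (m+1) ht T h h'
  have hneq : ∀ (a1 a2 a3 b1 b2 b3 : ℕ), (¬ (a1 = b1 ∧ a2 = b2 ∧ a3 = b3)) →
      (∀ w ∈ ([a1,a2,a3] : List ℕ), (m+1)*t ≤ w) →
      (∀ w ∈ ([b1,b2,b3] : List ℕ), (m+1)*t ≤ w) →
      ([a1,a2,a3] : List ℕ).Sorted (· ≤ ·) → ([b1,b2,b3] : List ℕ).Sorted (· ≤ ·) →
      (↑(((List.range (m+1)).map (fun j => j*t+1)) ++ [a1,a2,a3]) : Multiset ℕ) ≠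
      ↑(((List.range (m+1)).map (fun j => j*t+1)) ++ [b1,b2,b3]) := by
    intro a1 a2 a3 b1 b2 b3 hne hga hgb hsa hsb
    refine coe_ne_coe_of_sorted (tsortF _ hsa hga) (tsortF _ hsb hgb) ?_
    intro he
    have hc := List.append_cancel_left he
    simp only [List.cons.injEq, and_true] at hc
    exact hne ⟨hc.1, hc.2.1, hc.2.2⟩
  have sp12 := sp_full t (m+1) ht ((m+1)*t+1) ((m+2)*t+2) ((m+3)*t+2) ((m+1)*t+1) ((m+2)*t+2) ((m+3)*t+4) ((m+1)*t+1) ((m+1)*t+1) ((m+2)*t+2) ((m+2)*t+2) ((m+3)*t+2) ((m+3)*t+4)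
      (by simp only [Multiset.insert_eq_cons, ← Multiset.cons_coe, Multiset.coe_nil,
            ← Multiset.singleton_add, add_zero]; abel)
      ((hsort6 _ _ _ _ _ _).mpr (by omega))
      (by intro y hy; simp only [List.mem_cons, List.not_mem_nil, or_false] at hy; rcases hy with rfl | rfl | rfl | rfl | rfl | rfl <;> omega)
  have sp23 := sp_full t (m+1) ht ((m+1)*t+1) ((m+2)*t+2) ((m+3)*t+4) ((m+1)*t+1) ((m+2)*t+1) ((m+3)*t+3) ((m+1)*t+1) ((m+1)*t+1) ((m+2)*t+1) ((m+2)*t+2) ((m+3)*t+3) ((m+3)*t+4)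
      (by simp only [Multiset.insert_eq_cons, ← Multiset.cons_coe, Multiset.coe_nil,
            ← Multiset.singleton_add, add_zero]; abel)
      ((hsort6 _ _ _ _ _ _).mpr (by omega))
      (by intro y hy; simp only [List.mem_cons, List.not_mem_nil, or_false] at hy; rcases hy with rfl | rfl | rfl | rfl | rfl | rfl <;> omega)
  have sp34 := sp_full t (m+1) ht ((m+1)*t+1) ((m+2)*t+1) ((m+3)*t+3) ((m+1)*t+2) ((m+2)*t+2) ((m+3)*t+3) ((m+1)*t+1) ((m+1)*t+2) ((m+2)*t+1) ((m+2)*t+2) ((m+3)*t+3) ((m+3)*t+3)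
      (by simp only [Multiset.insert_eq_cons, ← Multiset.cons_coe, Multiset.coe_nil,
            ← Multiset.singleton_add, add_zero]; abel)
      ((hsort6 _ _ _ _ _ _).mpr (by omega))
      (by intro y hy; simp only [List.mem_cons, List.not_mem_nil, or_false] at hy; rcases hy with rfl | rfl | rfl | rfl | rfl | rfl <;> omega)
  have sp41 := sp_full t (m+1) ht ((m+1)*t+2) ((m+2)*t+2) ((m+3)*t+3) ((m+1)*t+1) ((m+2)*t+2) ((m+3)*t+2) ((m+1)*t+1) ((m+1)*t+2) ((m+2)*t+2) ((m+2)*t+2) ((m+3)*t+2) ((m+3)*t+3)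
      (by simp only [Multiset.insert_eq_cons, ← Multiset.cons_coe, Multiset.coe_nil,
            ← Multiset.singleton_add, add_zero]; abel)
      ((hsort6 _ _ _ _ _ _).mpr (by omega))
      (by intro y hy; simp only [List.mem_cons, List.not_mem_nil, or_false] at hy; rcases hy with rfl | rfl | rfl | rfl | rfl | rfl <;> omega)
  have sp13 := sp_full t (m+1) ht ((m+1)*t+1) ((m+2)*t+2) ((m+3)*t+2) ((m+1)*t+1) ((m+2)*t+1) ((m+3)*t+3) ((m+1)*t+1) ((m+1)*t+1) ((m+2)*t+1) ((m+2)*t+2) ((m+3)*t+2) ((m+3)*t+3)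
      (by simp only [Multiset.insert_eq_cons, ← Multiset.cons_coe, Multiset.coe_nil,
            ← Multiset.singleton_add, add_zero]; abel)
      ((hsort6 _ _ _ _ _ _).mpr (by omega))
      (by intro y hy; simp only [List.mem_cons, List.not_mem_nil, or_false] at hy; rcases hy with rfl | rfl | rfl | rfl | rfl | rfl <;> omega)
  have sp31 := sp_full t (m+1) ht ((m+1)*t+1) ((m+2)*t+1) ((m+3)*t+3) ((m+1)*t+1) ((m+2)*t+2) ((m+3)*t+2) ((m+1)*t+1) ((m+1)*t+1) ((m+2)*t+1) ((m+2)*t+2) ((m+3)*t+2) ((m+3)*t+3)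
      (by simp only [Multiset.insert_eq_cons, ← Multiset.cons_coe, Multiset.coe_nil,
            ← Multiset.singleton_add, add_zero]; abel)
      ((hsort6 _ _ _ _ _ _).mpr (by omega))
      (by intro y hy; simp only [List.mem_cons, List.not_mem_nil, or_false] at hy; rcases hy with rfl | rfl | rfl | rfl | rfl | rfl <;> omega)
  have sp24 := sp_full t (m+1) ht ((m+1)*t+1) ((m+2)*t+2) ((m+3)*t+4) ((m+1)*t+2) ((m+2)*t+2) ((m+3)*t+3) ((m+1)*t+1) ((m+1)*t+2) ((m+2)*t+2) ((m+2)*t+2) ((m+3)*t+3) ((m+3)*t+4)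
      (by simp only [Multiset.insert_eq_cons, ← Multiset.cons_coe, Multiset.coe_nil,
            ← Multiset.singleton_add, add_zero]; abel)
      ((hsort6 _ _ _ _ _ _).mpr (by omega))
      (by intro y hy; simp only [List.mem_cons, List.not_mem_nil, or_false] at hy; rcases hy with rfl | rfl | rfl | rfl | rfl | rfl <;> omega)
  have sp42 := sp_full t (m+1) ht ((m+1)*t+2) ((m+2)*t+2) ((m+3)*t+3) ((m+1)*t+1) ((m+2)*t+2) ((m+3)*t+4) ((m+1)*t+1) ((m+1)*t+2) ((m+2)*t+2) ((m+2)*t+2) ((m+3)*t+3) ((m+3)*t+4)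
      (by simp only [Multiset.insert_eq_cons, ← Multiset.cons_coe, Multiset.coe_nil,
            ← Multiset.singleton_add, add_zero]; abel)
      ((hsort6 _ _ _ _ _ _).mpr (by omega))
      (by intro y hy; simp only [List.mem_cons, List.not_mem_nil, or_false] at hy; rcases hy with rfl | rfl | rfl | rfl | rfl | rfl <;> omega)

  refine ⟨hmem1, hmem2, hmem3, hmem4, ?_, Or.inl sp12, Or.inr sp23, Or.inl sp34,
    Or.inr sp41, ?_, ?_, ?_, ?_⟩
  · refine List.Pairwise.cons ?_ (List.Pairwise.cons ?_ (List.Pairwise.cons ?_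
      (List.Pairwise.cons (by simp) List.Pairwise.nil)))
    · intro bb hbb
      simp only [List.mem_cons, List.mem_singleton, List.not_mem_nil, or_false] at hbb
      rcases hbb with rfl | rfl | rfl
      · intro he
        exact hneq ((m+1)*t+1) ((m+2)*t+2) ((m+3)*t+2) ((m+1)*t+1) ((m+2)*t+2) ((m+3)*t+4) (by omega)
          (by intro w hw; simp only [List.mem_cons, List.not_mem_nil, or_false] at hw; rcases hw with rfl | rfl | rfl <;> omega)
          (by intro w hw; simp only [List.mem_cons, List.not_mem_nil, or_false] at hw; rcases hw with rfl | rfl | rfl <;> omega)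
          (sort3 _ _ _ (by omega) (by omega)) (sort3 _ _ _ (by omega) (by omega))
          ((tri_add ((m+1)*t+1) ((m+2)*t+2) ((m+3)*t+2) ((List.range (m+1)).map (fun j => j*t+1))).symm.trans
            (he.trans (tri_add ((m+1)*t+1) ((m+2)*t+2) ((m+3)*t+4) ((List.range (m+1)).map (fun j => j*t+1)))))
      · intro he
        exact hneq ((m+1)*t+1) ((m+2)*t+2) ((m+3)*t+2) ((m+1)*t+1) ((m+2)*t+1) ((m+3)*t+3) (by omega)
          (by intro w hw; simp only [List.mem_cons, List.not_mem_nil, or_false] at hw; rcases hw with rfl | rfl | rfl <;> omega)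
          (by intro w hw; simp only [List.mem_cons, List.not_mem_nil, or_false] at hw; rcases hw with rfl | rfl | rfl <;> omega)
          (sort3 _ _ _ (by omega) (by omega)) (sort3 _ _ _ (by omega) (by omega))
          ((tri_add ((m+1)*t+1) ((m+2)*t+2) ((m+3)*t+2) ((List.range (m+1)).map (fun j => j*t+1))).symm.trans
            (he.trans (tri_add ((m+1)*t+1) ((m+2)*t+1) ((m+3)*t+3) ((List.range (m+1)).map (fun j => j*t+1)))))
      · intro he
        exact hneq ((m+1)*t+1) ((m+2)*t+2) ((m+3)*t+2) ((m+1)*t+2) ((m+2)*t+2) ((m+3)*t+3) (by omega)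
          (by intro w hw; simp only [List.mem_cons, List.not_mem_nil, or_false] at hw; rcases hw with rfl | rfl | rfl <;> omega)
          (by intro w hw; simp only [List.mem_cons, List.not_mem_nil, or_false] at hw; rcases hw with rfl | rfl | rfl <;> omega)
          (sort3 _ _ _ (by omega) (by omega)) (sort3 _ _ _ (by omega) (by omega))
          ((tri_add ((m+1)*t+1) ((m+2)*t+2) ((m+3)*t+2) ((List.range (m+1)).map (fun j => j*t+1))).symm.trans
            (he.trans (tri_add ((m+1)*t+2) ((m+2)*t+2) ((m+3)*t+3) ((List.range (m+1)).map (fun j => j*t+1)))))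
    · intro bb hbb
      simp only [List.mem_cons, List.mem_singleton, List.not_mem_nil, or_false] at hbb
      rcases hbb with rfl | rfl
      · intro he
        exact hneq ((m+1)*t+1) ((m+2)*t+2) ((m+3)*t+4) ((m+1)*t+1) ((m+2)*t+1) ((m+3)*t+3) (by omega)
          (by intro w hw; simp only [List.mem_cons, List.not_mem_nil, or_false] at hw; rcases hw with rfl | rfl | rfl <;> omega)
          (by intro w hw; simp only [List.mem_cons, List.not_mem_nil, or_false] at hw; rcases hw with rfl | rfl | rfl <;> omega)
          (sort3 _ _ _ (by omega) (by omega)) (sort3 _ _ _ (by omega) (by omega))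
          ((tri_add ((m+1)*t+1) ((m+2)*t+2) ((m+3)*t+4) ((List.range (m+1)).map (fun j => j*t+1))).symm.trans
            (he.trans (tri_add ((m+1)*t+1) ((m+2)*t+1) ((m+3)*t+3) ((List.range (m+1)).map (fun j => j*t+1)))))
      · intro he
        exact hneq ((m+1)*t+1) ((m+2)*t+2) ((m+3)*t+4) ((m+1)*t+2) ((m+2)*t+2) ((m+3)*t+3) (by omega)
          (by intro w hw; simp only [List.mem_cons, List.not_mem_nil, or_false] at hw; rcases hw with rfl | rfl | rfl <;> omega)
          (by intro w hw; simp only [List.mem_cons, List.not_mem_nil, or_false] at hw; rcases hw with rfl | rfl | rfl <;> omega)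
          (sort3 _ _ _ (by omega) (by omega)) (sort3 _ _ _ (by omega) (by omega))
          ((tri_add ((m+1)*t+1) ((m+2)*t+2) ((m+3)*t+4) ((List.range (m+1)).map (fun j => j*t+1))).symm.trans
            (he.trans (tri_add ((m+1)*t+2) ((m+2)*t+2) ((m+3)*t+3) ((List.range (m+1)).map (fun j => j*t+1)))))
    · intro bb hbb
      simp only [List.mem_cons, List.mem_singleton, List.not_mem_nil, or_false] at hbb
      rcases hbb with rfl
      intro he
      exact hneq ((m+1)*t+1) ((m+2)*t+1) ((m+3)*t+3) ((m+1)*t+2) ((m+2)*t+2) ((m+3)*t+3) (by omega)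
        (by intro w hw; simp only [List.mem_cons, List.not_mem_nil, or_false] at hw; rcases hw with rfl | rfl | rfl <;> omega)
        (by intro w hw; simp only [List.mem_cons, List.not_mem_nil, or_false] at hw; rcases hw with rfl | rfl | rfl <;> omega)
        (sort3 _ _ _ (by omega) (by omega)) (sort3 _ _ _ (by omega) (by omega))
        ((tri_add ((m+1)*t+1) ((m+2)*t+1) ((m+3)*t+3) ((List.range (m+1)).map (fun j => j*t+1))).symm.trans
          (he.trans (tri_add ((m+1)*t+2) ((m+2)*t+2) ((m+3)*t+3) ((List.range (m+1)).map (fun j => j*t+1)))))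
  · rintro (h | h)
    · have key := congrArg Prod.fst ((sp13.symm).trans h)
      exact hneq ((m+1)*t+1) ((m+2)*t+1) ((m+3)*t+2) ((m+1)*t+1) ((m+2)*t+2) ((m+3)*t+2) (by omega)
        (by intro w hw; simp only [List.mem_cons, List.not_mem_nil, or_false] at hw; rcases hw with rfl | rfl | rfl <;> omega)
        (by intro w hw; simp only [List.mem_cons, List.not_mem_nil, or_false] at hw; rcases hw with rfl | rfl | rfl <;> omega)
        (sort3 _ _ _ (by omega) (by omega)) (sort3 _ _ _ (by omega) (by omega))
        ((tri_add ((m+1)*t+1) ((m+2)*t+1) ((m+3)*t+2) ((List.range (m+1)).map (fun j => j*t+1))).symm.trans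
          (key.trans (tri_add ((m+1)*t+1) ((m+2)*t+2) ((m+3)*t+2) ((List.range (m+1)).map (fun j => j*t+1)))))
    · have key := congrArg Prod.fst ((sp13.symm).trans h)
      exact hneq ((m+1)*t+1) ((m+2)*t+1) ((m+3)*t+2) ((m+1)*t+1) ((m+2)*t+1) ((m+3)*t+3) (by omega)
        (by intro w hw; simp only [List.mem_cons, List.not_mem_nil, or_false] at hw; rcases hw with rfl | rfl | rfl <;> omega)
        (by intro w hw; simp only [List.mem_cons, List.not_mem_nil, or_false] at hw; rcases hw with rfl | rfl | rfl <;> omega)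
        (sort3 _ _ _ (by omega) (by omega)) (sort3 _ _ _ (by omega) (by omega))
        ((tri_add ((m+1)*t+1) ((m+2)*t+1) ((m+3)*t+2) ((List.range (m+1)).map (fun j => j*t+1))).symm.trans
          (key.trans (tri_add ((m+1)*t+1) ((m+2)*t+1) ((m+3)*t+3) ((List.range (m+1)).map (fun j => j*t+1)))))
  · rintro (h | h)
    · have key := congrArg Prod.fst ((sp31.symm).trans h)
      exact hneq ((m+1)*t+1) ((m+2)*t+1) ((m+3)*t+2) ((m+1)*t+1) ((m+2)*t+1) ((m+3)*t+3) (by omega)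
        (by intro w hw; simp only [List.mem_cons, List.not_mem_nil, or_false] at hw; rcases hw with rfl | rfl | rfl <;> omega)
        (by intro w hw; simp only [List.mem_cons, List.not_mem_nil, or_false] at hw; rcases hw with rfl | rfl | rfl <;> omega)
        (sort3 _ _ _ (by omega) (by omega)) (sort3 _ _ _ (by omega) (by omega))
        ((tri_add ((m+1)*t+1) ((m+2)*t+1) ((m+3)*t+2) ((List.range (m+1)).map (fun j => j*t+1))).symm.trans
          (key.trans (tri_add ((m+1)*t+1) ((m+2)*t+1) ((m+3)*t+3) ((List.range (m+1)).map (fun j => j*t+1)))))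
    · have key := congrArg Prod.fst ((sp31.symm).trans h)
      exact hneq ((m+1)*t+1) ((m+2)*t+1) ((m+3)*t+2) ((m+1)*t+1) ((m+2)*t+2) ((m+3)*t+2) (by omega)
        (by intro w hw; simp only [List.mem_cons, List.not_mem_nil, or_false] at hw; rcases hw with rfl | rfl | rfl <;> omega)
        (by intro w hw; simp only [List.mem_cons, List.not_mem_nil, or_false] at hw; rcases hw with rfl | rfl | rfl <;> omega)
        (sort3 _ _ _ (by omega) (by omega)) (sort3 _ _ _ (by omega) (by omega))
        ((tri_add ((m+1)*t+1) ((m+2)*t+1) ((m+3)*t+2) ((List.range (m+1)).map (fun j => j*t+1))).symm.trans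
          (key.trans (tri_add ((m+1)*t+1) ((m+2)*t+2) ((m+3)*t+2) ((List.range (m+1)).map (fun j => j*t+1)))))
  · rintro (h | h)
    · have key := congrArg Prod.fst ((sp24.symm).trans h)
      exact hneq ((m+1)*t+1) ((m+2)*t+2) ((m+3)*t+3) ((m+1)*t+1) ((m+2)*t+2) ((m+3)*t+4) (by omega)
        (by intro w hw; simp only [List.mem_cons, List.not_mem_nil, or_false] at hw; rcases hw with rfl | rfl | rfl <;> omega)
        (by intro w hw; simp only [List.mem_cons, List.not_mem_nil, or_false] at hw; rcases hw with rfl | rfl | rfl <;> omega)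
        (sort3 _ _ _ (by omega) (by omega)) (sort3 _ _ _ (by omega) (by omega))
        ((tri_add ((m+1)*t+1) ((m+2)*t+2) ((m+3)*t+3) ((List.range (m+1)).map (fun j => j*t+1))).symm.trans
          (key.trans (tri_add ((m+1)*t+1) ((m+2)*t+2) ((m+3)*t+4) ((List.range (m+1)).map (fun j => j*t+1)))))
    · have key := congrArg Prod.fst ((sp24.symm).trans h)
      exact hneq ((m+1)*t+1) ((m+2)*t+2) ((m+3)*t+3) ((m+1)*t+2) ((m+2)*t+2) ((m+3)*t+3) (by omega)
        (by intro w hw; simp only [List.mem_cons, List.not_mem_nil, or_false] at hw; rcases hw with rfl | rfl | rfl <;> omega)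
        (by intro w hw; simp only [List.mem_cons, List.not_mem_nil, or_false] at hw; rcases hw with rfl | rfl | rfl <;> omega)
        (sort3 _ _ _ (by omega) (by omega)) (sort3 _ _ _ (by omega) (by omega))
        ((tri_add ((m+1)*t+1) ((m+2)*t+2) ((m+3)*t+3) ((List.range (m+1)).map (fun j => j*t+1))).symm.trans
          (key.trans (tri_add ((m+1)*t+2) ((m+2)*t+2) ((m+3)*t+3) ((List.range (m+1)).map (fun j => j*t+1)))))
  · rintro (h | h)
    · have key := congrArg Prod.fst ((sp42.symm).trans h)
      exact hneq ((m+1)*t+1) ((m+2)*t+2) ((m+3)*t+3) ((m+1)*t+2) ((m+2)*t+2) ((m+3)*t+3) (by omega)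
        (by intro w hw; simp only [List.mem_cons, List.not_mem_nil, or_false] at hw; rcases hw with rfl | rfl | rfl <;> omega)
        (by intro w hw; simp only [List.mem_cons, List.not_mem_nil, or_false] at hw; rcases hw with rfl | rfl | rfl <;> omega)
        (sort3 _ _ _ (by omega) (by omega)) (sort3 _ _ _ (by omega) (by omega))
        ((tri_add ((m+1)*t+1) ((m+2)*t+2) ((m+3)*t+3) ((List.range (m+1)).map (fun j => j*t+1))).symm.trans
          (key.trans (tri_add ((m+1)*t+2) ((m+2)*t+2) ((m+3)*t+3) ((List.range (m+1)).map (fun j => j*t+1)))))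
    · have key := congrArg Prod.fst ((sp42.symm).trans h)
      exact hneq ((m+1)*t+1) ((m+2)*t+2) ((m+3)*t+3) ((m+1)*t+1) ((m+2)*t+2) ((m+3)*t+4) (by omega)
        (by intro w hw; simp only [List.mem_cons, List.not_mem_nil, or_false] at hw; rcases hw with rfl | rfl | rfl <;> omega)
        (by intro w hw; simp only [List.mem_cons, List.not_mem_nil, or_false] at hw; rcases hw with rfl | rfl | rfl <;> omega)
        (sort3 _ _ _ (by omega) (by omega)) (sort3 _ _ _ (by omega) (by omega))
        ((tri_add ((m+1)*t+1) ((m+2)*t+2) ((m+3)*t+3) ((List.range (m+1)).map (fun j => j*t+1))).symm.trans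
          (key.trans (tri_add ((m+1)*t+1) ((m+2)*t+2) ((m+3)*t+4) ((List.range (m+1)).map (fun j => j*t+1)))))

/-- for a t-spread monomial u = x₂·x_{i₂}···x_{i_d} (d ≥ 4) with some
i_j ≥ (j−1)t+4, the four listed monomials are minimal generators of B_t(u) and form an
induced 4-cycle in the sorted graph. Here v = ∏_{j=1}^{d−3} x_{(j−1)t+1}. -/
theorem i1_two_big_gap_cycle (t d : ℕ) (ht : 1 ≤ t) (hd : 4 ≤ d) (i : ℕ → ℕ)
    (h1 : i 1 = 2) (hspread : ∀ j, 1 ≤ j → j < d → i j + t ≤ i (j + 1))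
    (hbig : ∃ j, 2 ≤ j ∧ j ≤ d ∧ (j - 1) * t + 4 ≤ i j) :
    (let u : Multiset ℕ := ↑((List.range d).map (fun k => i (k + 1)));
     let v : Multiset ℕ := ↑((List.range (d - 3)).map (fun j => j * t + 1));
     let m₁ : Multiset ℕ :=
       {(d - 3) * t + 1, (d - 2) * t + 2, (d - 1) * t + 2} + v;
     let m₂ : Multiset ℕ :=
       {(d - 3) * t + 1, (d - 2) * t + 2, (d - 1) * t + 4} + v;
     let m₃ : Multiset ℕ :=
       {(d - 3) * t + 1, (d - 2) * t + 1, (d - 1) * t + 3} + v;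
     let m₄ : Multiset ℕ :=
       {(d - 3) * t + 2, (d - 2) * t + 2, (d - 1) * t + 3} + v;
     m₁ ∈ BtGens t u ∧ m₂ ∈ BtGens t u ∧ m₃ ∈ BtGens t u ∧ m₄ ∈ BtGens t u ∧
     List.Pairwise (· ≠ ·) [m₁, m₂, m₃, m₄] ∧
     SortedPair m₁ m₂ ∧ SortedPair m₂ m₃ ∧ SortedPair m₃ m₄ ∧ SortedPair m₄ m₁ ∧
     ¬ SortedPair m₁ m₃ ∧ ¬ SortedPair m₃ m₁ ∧
     ¬ SortedPair m₂ m₄ ∧ ¬ SortedPair m₄ m₂) := by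
  obtain ⟨m, rfl⟩ : ∃ m, d = m + 4 := ⟨d - 4, by omega⟩
  have e3 : m + 4 - 3 = m + 1 := by omega
  have e2 : m + 4 - 2 = m + 2 := by omega
  have e1 : m + 4 - 1 = m + 3 := by omega
  simp only [e3, e2, e1]
  exact main_cycle t m ht i h1 hspread hbig
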